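/- Let g be a Leibniz algebra over a field K and (V,l,r) a representation of g. For k ≥ 0 let C^k(g,V) be the space of k-multilinear maps g^k → V, and define ∂ : C^k(g,V) → C^{k+1}(g,V) by ∂c(x₁,…,x_{k+1}) = Σ_{i=1}^{k}(−1)^{i+1} l_{x_i}(c(x₁,…,x̂_i,…,x_{k+1})) + (−1)^{k+1} r_{x_{k+1}}(c(x₁,…,x_k)) + Σ_{1≤i<j≤k+1}(−1)^{i} c(x₁,…,x̂_i,…,x_{j−1},[x_i,x_j],x_{j+1},…,x_{k+1}). Then ∂∘∂ = 0, i.e. ∂(∂c) = 0 for every k-cochain c. -/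

import Mathlib

/-- The Leibniz coboundary operator (0-indexed version of the formula
`∂c(x₁,…,x_{k+1}) = Σ_{i=1}^{k}(−1)^{i+1} l_{x_i} c(x₁,…,x̂_i,…,x_{k+1})
 + (−1)^{k+1} r_{x_{k+1}} c(x₁,…,x_k)
 + Σ_{1≤i<j≤k+1}(−1)^{i} c(x₁,…,x̂_i,…,x_{j−1},[x_i,x_j],x_{j+1},…,x_{k+1})`). -/
def leibnizCoboundary {K : Type*} [Field K] {g V : Type*} [AddCommGroup g] [Module K g]
    [AddCommGroup V] [Module K V]
    (b : g →ₗ[K] g →ₗ[K] g) (l r : g →ₗ[K] Module.End K V)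
    {k : ℕ} (c : (Fin k → g) → V) : (Fin (k + 1) → g) → V := fun x =>
  (∑ p : Fin k, ((-1 : ℤ) ^ (p : ℕ)) • l (x p.castSucc) (c (x ∘ p.castSucc.succAbove)))
    + ((-1 : ℤ) ^ (k + 1)) • r (x (Fin.last k)) (c (x ∘ Fin.castSucc))
    + ∑ p : Fin (k + 1), ∑ q : Fin (k + 1),
        if h : p < q then
          ((-1 : ℤ) ^ ((p : ℕ) + 1)) •
            c (Function.update (x ∘ p.succAbove)
                (q.pred (Fin.pos_iff_ne_zero.mp (lt_of_le_of_lt (Fin.zero_le p) h)))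
                (b (x p) (x q)))
        else 0

namespace LeibnizAux
set_option linter.unusedSectionVars false

variable {K : Type*} [Field K] {g V : Type*} [AddCommGroup g] [Module K g]
    [AddCommGroup V] [Module K V]
    (b : g →ₗ[K] g →ₗ[K] g) (l r : g →ₗ[K] Module.End K V)

/-- Insertion of `a` in the first slot. -/
def ins (a : g) {k : ℕ} (c : (Fin (k + 1) → g) → V) : (Fin k → g) → V :=
  fun y => c (Fin.cons a y)

/-- Lie-derivative-type operator. -/
def lieD (a : g) {k : ℕ} (c : (Fin k → g) → V) : (Fin k → g) → V :=
  fun y => l a (c y) - ∑ j, c (Function.update y j (b a (y j)))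

/-- Additivity in each slot. -/
abbrev Add1 {k : ℕ} (c : (Fin k → g) → V) : Prop :=
  ∀ (y : Fin k → g) (i : Fin k) (u v : g),
    c (Function.update y i (u + v)) = c (Function.update y i u) + c (Function.update y i v)

-- small Fin/cons aux lemmas
lemma comp_succAbove_zero {k : ℕ} (a : g) (y : Fin (k + 1) → g) :
    Fin.cons a y ∘ (0 : Fin (k + 2)).succAbove = y := by
  funext j; simp [Fin.succAbove_zero]

lemma comp_succAbove_succ {k : ℕ} (a : g) (y : Fin (k + 1) → g) (p : Fin (k + 1)) :
    Fin.cons a y ∘ (p.succ).succAbove = Fin.cons a (y ∘ p.succAbove) := by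
  funext j
  induction j using Fin.cases with
  | zero => simp [Fin.succ_succAbove_zero]
  | succ t => simp [Fin.succ_succAbove_succ]

lemma comp_castSucc {k : ℕ} (a : g) (y : Fin (k + 1) → g) :
    Fin.cons a y ∘ Fin.castSucc = Fin.cons a (y ∘ Fin.castSucc) := by
  funext j
  induction j using Fin.cases with
  | zero => simp
  | succ t => simp [← Fin.succ_castSucc]

lemma update_cons_succ {k : ℕ} (a : g) (w : Fin k → g) (j : Fin k) (v : g) :
    Function.update (Fin.cons a w) j.succ v = Fin.cons (α := fun _ => g) a (Function.update w j v) := by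
  funext i
  induction i using Fin.cases with
  | zero => rw [Function.update_of_ne (Ne.symm (Fin.succ_ne_zero j))]; simp
  | succ t =>
    rcases eq_or_ne t j with rfl | h
    · simp
    · rw [Function.update_of_ne (by simpa using h), Fin.cons_succ, Fin.cons_succ,
        Function.update_of_ne h]

lemma lt_succ_iff' {n : ℕ} (p : Fin (n + 1)) (j : Fin n) : p < j.succ ↔ p ≤ j.castSucc := by
  rw [Fin.lt_def, Fin.le_def]; simp

/-- proof-free form of the coboundary. -/
lemma D_eq {k : ℕ} (c : (Fin k → g) → V) (x : Fin (k + 1) → g) :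
    leibnizCoboundary b l r c x =
      (∑ p : Fin k, ((-1 : ℤ) ^ (p : ℕ)) • l (x p.castSucc) (c (x ∘ p.castSucc.succAbove)))
        + ((-1 : ℤ) ^ (k + 1)) • r (x (Fin.last k)) (c (x ∘ Fin.castSucc))
        + ∑ p : Fin (k + 1), ∑ q : Fin k,
            if p ≤ q.castSucc then
              ((-1 : ℤ) ^ ((p : ℕ) + 1)) •
                c (Function.update (x ∘ p.succAbove) q (b (x p) (x q.succ)))
            else 0 := by
  unfold leibnizCoboundary
  congr 1
  apply Finset.sum_congr rfl
  intro p _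
  rw [Fin.sum_univ_succ]
  simp only [Fin.not_lt_zero, dite_false, zero_add, Fin.pred_succ, lt_succ_iff']
  apply Finset.sum_congr rfl
  intro j _
  split <;> rfl

lemma cartan {k : ℕ} (c : (Fin (k + 1) → g) → V) (a : g) (y : Fin (k + 1) → g) :
    leibnizCoboundary b l r (ins a c) y + leibnizCoboundary b l r c (Fin.cons (α := fun _ => g) a y)
      = lieD b l a c y := by
  rw [D_eq, D_eq]
  simp only [ins, lieD]
  have hT1 : ∑ p : Fin (k + 1), ((-1 : ℤ) ^ (p : ℕ)) •
        l (Fin.cons (α := fun _ => g) a y p.castSucc) (c (Fin.cons (α := fun _ => g) a y ∘ p.castSucc.succAbove))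
      = l a (c y) - ∑ p : Fin k, ((-1 : ℤ) ^ (p : ℕ)) •
          l (y p.castSucc) (c (Fin.cons (α := fun _ => g) a (y ∘ p.castSucc.succAbove))) := by
    rw [Fin.sum_univ_succ, sub_eq_add_neg]
    congr 1
    · have h0 : Fin.cons (α := fun _ => g) a y ∘ Fin.succ = y := by
        funext j; simp [Function.comp]
      simp [h0]
    · rw [← Finset.sum_neg_distrib]
      apply Finset.sum_congr rfl
      intro i _
      rw [← Fin.succ_castSucc, comp_succAbove_succ, Fin.cons_succ, Fin.val_succ, pow_succ,
        mul_smul, neg_one_smul, smul_neg]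
  have hT2 : ((-1 : ℤ) ^ (k + 1 + 1)) •
        r (Fin.cons (α := fun _ => g) a y (Fin.last (k + 1))) (c (Fin.cons (α := fun _ => g) a y ∘ Fin.castSucc))
      = -(((-1 : ℤ) ^ (k + 1)) • r (y (Fin.last k)) (c (Fin.cons (α := fun _ => g) a (y ∘ Fin.castSucc)))) := by
    rw [← Fin.succ_last, Fin.cons_succ, comp_castSucc, pow_succ, mul_smul, neg_one_smul,
      smul_neg]
  have hT3 : ∑ p : Fin (k + 2), ∑ q : Fin (k + 1),
        (if p ≤ q.castSucc then
          ((-1 : ℤ) ^ ((p : ℕ) + 1)) •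
            c (Function.update (Fin.cons (α := fun _ => g) a y ∘ p.succAbove) q
                (b (Fin.cons (α := fun _ => g) a y p) (Fin.cons (α := fun _ => g) a y q.succ)))
        else 0)
      = -(∑ j : Fin (k + 1), c (Function.update y j (b a (y j))))
        - ∑ p : Fin (k + 1), ∑ q : Fin k,
            (if p ≤ q.castSucc then
              ((-1 : ℤ) ^ ((p : ℕ) + 1)) •
                c (Fin.cons (α := fun _ => g) a (Function.update (y ∘ p.succAbove) q (b (y p) (y q.succ))))
            else 0) := by
    rw [Fin.sum_univ_succ, sub_eq_add_neg]
    congr 1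
    · -- p = 0 block
      rw [← Finset.sum_neg_distrib]
      apply Finset.sum_congr rfl
      intro q _
      have h1 : Fin.cons (α := fun _ => g) a y ∘ Fin.succ = y := by
        funext j; simp [Function.comp]
      simp [h1, Fin.zero_le]
    · -- p = i.succ blocks
      rw [← Finset.sum_neg_distrib]
      apply Finset.sum_congr rfl
      intro i _
      rw [Fin.sum_univ_succ, ← Finset.sum_neg_distrib]
      have h0 : ¬ (i.succ ≤ Fin.castSucc (0 : Fin (k+1))) := by
        simp [Fin.le_def, Fin.lt_def]
      rw [if_neg h0, zero_add]
      apply Finset.sum_congr rfl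
      intro t _
      rw [comp_succAbove_succ]
      simp only [Fin.cons_succ]
      rw [update_cons_succ, ← Fin.succ_castSucc]
      simp only [Fin.succ_le_succ_iff]
      split
      · rw [Fin.val_succ, pow_succ (-1 : ℤ) ((i : ℕ) + 1), mul_smul, neg_one_smul, smul_neg]
      · rw [neg_zero]
  rw [hT1, hT2, hT3]
  abel

lemma lieD_cons {k : ℕ} (c : (Fin (k + 1) → g) → V) (x w : g) (y : Fin k → g) :
    lieD b l x c (Fin.cons w y)
      = lieD b l x (fun t => c (Fin.cons w t)) y - c (Fin.cons (b x w) y) := by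
  simp only [lieD]
  rw [Fin.sum_univ_succ, Fin.cons_zero, Fin.update_cons_zero]
  have h : ∀ t : Fin k,
      Function.update (Fin.cons (α := fun _ => g) w y) t.succ
          (b x (Fin.cons (α := fun _ => g) w y t.succ))
        = Fin.cons (α := fun _ => g) w (Function.update y t (b x (y t))) := by
    intro t; rw [Fin.cons_succ, update_cons_succ]
  simp only [h]
  abel

lemma lieD_sub {k : ℕ} (c c' : (Fin k → g) → V) (a : g) (y : Fin k → g) :
    lieD b l a (fun t => c t - c' t) y = lieD b l a c y - lieD b l a c' y := by
  simp only [lieD, map_sub, Finset.sum_sub_distrib]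
  abel

lemma add1_cons {k : ℕ} {c : (Fin (k + 1) → g) → V} (hc : Add1 c) (w : g) :
    Add1 (fun t => c (Fin.cons w t)) := by
  intro y i u v
  simp only [← update_cons_succ]
  exact hc _ _ _ _

lemma add1_tail {k : ℕ} {c : (Fin (k + 1) → g) → V} (hc : Add1 c) (u v : g) (y : Fin k → g) :
    c (Fin.cons (u + v) y) = c (Fin.cons u y) + c (Fin.cons v y) := by
  have h1 := hc (Fin.cons u y) 0 u v
  rwa [Fin.update_cons_zero, Fin.update_cons_zero, Fin.update_cons_zero] at h1

lemma add1_zero {k : ℕ} {c : (Fin k → g) → V} (hc : Add1 c) (y : Fin k → g) (i : Fin k) :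
    c (Function.update y i 0) = 0 := by
  have h := hc y i 0 0
  rw [add_zero] at h
  simpa using h

lemma lieD_add_arg {k : ℕ} {c : (Fin k → g) → V} (hc : Add1 c) (u v : g) (y : Fin k → g) :
    lieD b l (u + v) c y = lieD b l u c y + lieD b l v c y := by
  simp only [lieD, map_add, LinearMap.add_apply, hc, Finset.sum_add_distrib]
  abel

lemma lieD_zero_arg {k : ℕ} {c : (Fin k → g) → V} (hc : Add1 c) {w : g}
    (hw : l w = 0) (hbw : ∀ z, b w z = 0) (y : Fin k → g) :
    lieD b l w c y = 0 := by
  simp [lieD, hw, hbw, add1_zero hc]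

section Algebra
variable (hl : ∀ x y : g, l (b x y) = l x * l y - l y * l x)
    (leib : ∀ x y z : g, b x (b y z) = b (b x y) z + b y (b x z))

include hl leib in
lemma lieD_flip {k : ℕ} {c : (Fin k → g) → V} (hc : Add1 c) (x a : g) (y : Fin k → g) :
    lieD b l (b x a) c y = -lieD b l (b a x) c y := by
  have hw : l (b x a + b a x) = 0 := by
    rw [map_add, hl, hl]; abel
  have hb : ∀ z, b (b x a + b a x) z = 0 := by
    intro z
    have h1 := leib x a z
    have h2 := leib a x z
    have h3 : b (b x a) z = b x (b a z) - b a (b x z) := by rw [h1]; abel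
    rw [map_add, LinearMap.add_apply, h3, h2]; abel
  have hsum : lieD b l (b x a) c y + lieD b l (b a x) c y = 0 := by
    rw [← lieD_add_arg b l hc]
    exact lieD_zero_arg b l hc hw hb y
  exact eq_neg_of_add_eq_zero_left hsum

include hl leib in
lemma lieD_comm : ∀ (k : ℕ) (c : (Fin k → g) → V), Add1 c → ∀ (x a : g) (y : Fin k → g),
    lieD b l x (lieD b l a c) y - lieD b l a (lieD b l x c) y = lieD b l (b x a) c y := by
  intro k
  induction k with
  | zero =>
    intro c hc x a y
    simp [lieD, hl, LinearMap.sub_apply, Module.End.mul_apply]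
  | succ n ih =>
    intro c hc x a y
    induction y using Fin.consCases with
    | cons w t =>
      simp only [lieD_cons, lieD_sub]
      have H1 := ih (fun s => c (Fin.cons w s)) (add1_cons hc w) x a t
      have H2 : c (Fin.cons (b x (b a w)) t)
          = c (Fin.cons (b (b x a) w) t) + c (Fin.cons (b a (b x w)) t) := by
        rw [leib x a w]; exact add1_tail hc _ _ t
      rw [H2, ← H1]
      abel

end Algebra


lemma D_cons {k : ℕ} (c : (Fin (k + 1) → g) → V) (a : g) (y : Fin (k + 1) → g) :
    leibnizCoboundary b l r c (Fin.cons a y)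
      = lieD b l a c y - leibnizCoboundary b l r (fun t => c (Fin.cons a t)) y := by
  rw [← cartan b l r c a y]
  unfold ins
  abel

lemma ite_sub_zero (P : Prop) [Decidable P] (u v : V) :
    (if P then u - v else 0) = (if P then u else 0) - (if P then v else 0) := by
  split <;> simp

lemma D_sub {k : ℕ} (c c' : (Fin k → g) → V) (x : Fin (k + 1) → g) :
    leibnizCoboundary b l r (fun t => c t - c' t) x
      = leibnizCoboundary b l r c x - leibnizCoboundary b l r c' x := by
  simp only [D_eq, map_sub, smul_sub, ite_sub_zero, Finset.sum_sub_distrib]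
  abel

section Algebra2
variable (hl : ∀ x y : g, l (b x y) = l x * l y - l y * l x)
    (leib : ∀ x y z : g, b x (b y z) = b (b x y) z + b y (b x z))
    (hr : ∀ x y : g, r (b x y) = l x * r y - r y * l x)

include hl leib hr in
lemma D_lieD : ∀ (k : ℕ) (c : (Fin k → g) → V), Add1 c → ∀ (a : g) (z : Fin (k + 1) → g),
    leibnizCoboundary b l r (lieD b l a c) z = lieD b l a (leibnizCoboundary b l r c) z := by
  intro k
  induction k with
  | zero =>
    intro c hc a x
    have hcc : c = fun _ => c (fun i => i.elim0) :=
      funext fun u => congrArg c (funext fun i => i.elim0)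
    rw [hcc]
    simp only [leibnizCoboundary, lieD, Finset.univ_eq_empty, Finset.sum_empty,
      Fin.sum_univ_succ]
    simp only [Finset.univ_eq_empty, Finset.sum_empty, add_zero, zero_add, sub_zero,
      lt_irrefl, dite_false, pow_one, neg_one_smul, pow_zero, one_smul, map_neg, smul_neg,
      show Fin.last 0 = 0 from rfl, Function.update_self]
    rw [hr a (x 0), LinearMap.sub_apply, Module.End.mul_apply, Module.End.mul_apply]
    abel
  | succ n ih =>
    intro c hc a z
    induction z using Fin.consCases with
    | cons w t =>
      simp only [D_cons, lieD_cons, lieD_sub, D_sub]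
      rw [ih (fun s => c (Fin.cons w s)) (add1_cons hc w) a t]
      have H1 := lieD_comm b l hl leib (n + 1) c hc w a t
      have H2 := lieD_flip b l hl leib hc a w t
      rw [H2, ← H1]
      abel

variable (hrl : ∀ x y : g, r y * l x = -(r y * r x))

include hl leib hr hrl in
lemma DD : ∀ (k : ℕ) (c : (Fin k → g) → V), Add1 c → ∀ x : Fin (k + 2) → g,
    leibnizCoboundary b l r (leibnizCoboundary b l r c) x = 0 := by
  intro k
  induction k with
  | zero =>
    intro c hc x
    have hcc : c = fun _ => c (fun i => i.elim0) :=
      funext fun u => congrArg c (funext fun i => i.elim0)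
    rw [hcc]
    simp only [leibnizCoboundary, Finset.univ_eq_empty, Finset.sum_empty, Fin.sum_univ_succ,
      zero_add, add_zero, lt_irrefl, dite_false]
    rw [dif_pos (Fin.succ_pos 0), dif_neg (Fin.not_lt_zero _)]
    have key := DFunLike.congr_fun (hrl (x 0) (x 1)) (c fun i => i.elim0)
    rw [Module.End.mul_apply, LinearMap.neg_apply, Module.End.mul_apply] at key
    simp only [Fin.pred_succ, show (Fin.last 0 : Fin 1) = 0 from rfl, Function.update_self,
      pow_one, pow_zero, one_smul, neg_one_smul, pow_succ, Fin.val_zero, zero_add, smul_neg,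
      neg_neg, Fin.val_succ, Fin.isValue, mul_one, neg_mul, one_mul, neg_smul]
    rw [show ((x ∘ (Fin.castSucc (0 : Fin 1)).succAbove) 0) = x 1 from rfl,
      show ((x ∘ Fin.castSucc) 0) = x 0 from rfl,
      show x (Fin.last 1) = x 1 from rfl,
      show x (Fin.castSucc (0 : Fin 1)) = x 0 from rfl,
      show x (Fin.succ (0 : Fin 1)) = x 1 from rfl]
    rw [hr (x 0) (x 1), LinearMap.sub_apply, Module.End.mul_apply, Module.End.mul_apply, key]
    simp only [show ∀ v : V, (-1 : ℤ) • v = -v from fun v => neg_one_smul ℤ v, map_neg]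
    abel
  | succ n ih =>
    intro c hc x
    induction x using Fin.consCases with
    | cons w t =>
      rw [D_cons]
      have e1 : (fun s => leibnizCoboundary b l r c (Fin.cons w s))
          = fun s => lieD b l w c s
              - leibnizCoboundary b l r (fun t' => c (Fin.cons w t')) s :=
        funext fun s => D_cons b l r c w s
      rw [e1, D_sub, D_lieD b l r hl leib hr (n + 1) c hc w t,
        ih (fun t' => c (Fin.cons w t')) (add1_cons hc w) t]
      abel

end Algebra2

end LeibnizAux








/-- for a representation `(V,l,r)` of a Leibniz algebra `g`, the Leibniz
coboundary operator on multilinear cochains `C^k(g,V)` squares to zero: `∂(∂c) = 0`. -/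
theorem leibnizCoboundary_squared
    {K : Type*} [Field K] {g V : Type*} [AddCommGroup g] [Module K g]
    [AddCommGroup V] [Module K V]
    (b : g →ₗ[K] g →ₗ[K] g)
    (leib : ∀ x y z : g, b x (b y z) = b (b x y) z + b y (b x z))
    (l r : g →ₗ[K] Module.End K V)
    (hl : ∀ x y : g, l (b x y) = l x * l y - l y * l x)
    (hr : ∀ x y : g, r (b x y) = l x * r y - r y * l x)
    (hrl : ∀ x y : g, r y * l x = -(r y * r x))
    {k : ℕ} (c : MultilinearMap K (fun _ : Fin k => g) V) :
    ∀ x : Fin (k + 2) → g,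
      leibnizCoboundary b l r (leibnizCoboundary b l r (⇑c)) x = 0 := by
  intro x
  exact LeibnizAux.DD b l r hl leib hr hrl k (⇑c)
    (fun y i u v => c.map_update_add y i u v) x
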